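/- A D-balanced ideal has order exactly m or 0 at every point: let k have characteristic zero, R = k[x₁,…,xₙ] (or its localizations), and let I be an ideal with maximal order m (i.e., max over points p of ord_p I equals m). Assume I is D-balanced: (D^i I)^m ⊆ I^{m−i} for all 0 < i < m. Then for every point p, ord_p I ∈ {0, m}. -/

import Mathlib

/-- The derivative ideal `D(I)`: generated by `I` and all first partials of
elements of `I`. -/
noncomputable def Dop {k : Type*} [CommRing k] {n : ℕ}
    (I : Ideal (MvPolynomial (Fin n) k)) : Ideal (MvPolynomial (Fin n) k) :=
  I ⊔ Ideal.span {g | ∃ f ∈ I, ∃ i : Fin n, g = MvPolynomial.pderiv i f}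

/-- The maximal ideal of the point `p ∈ 𝔸ⁿ(k)`: generated by `xᵢ − pᵢ`. -/
noncomputable def mIdeal {k : Type*} [CommRing k] {n : ℕ} (p : Fin n → k) :
    Ideal (MvPolynomial (Fin n) k) :=
  Ideal.span (Set.range fun i : Fin n => MvPolynomial.X i - MvPolynomial.C (p i))

open MvPolynomial Finsupp

section Aux

variable {k : Type*} [Field k] [CharZero k] {n : ℕ}

/-- The maximal ideal at the origin. -/
noncomputable def M0 (k : Type*) [CommRing k] (n : ℕ) : Ideal (MvPolynomial (Fin n) k) :=
  Ideal.span (Set.range (MvPolynomial.X : Fin n → MvPolynomial (Fin n) k))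

lemma X_mem_M0 (i : Fin n) : (X i : MvPolynomial (Fin n) k) ∈ M0 k n :=
  Ideal.subset_span ⟨i, rfl⟩

lemma degsum_add (a b : Fin n →₀ ℕ) :
    (a + b).sum (fun _ e => e) = a.sum (fun _ e => e) + b.sum (fun _ e => e) :=
  Finsupp.sum_add_index' (fun _ => rfl) (fun _ _ _ => rfl)

lemma coeff_zero_of_mem_M0 {f : MvPolynomial (Fin n) k} (hf : f ∈ M0 k n) :
    coeff 0 f = 0 := by
  have h : M0 k n ≤ RingHom.ker (constantCoeff : MvPolynomial (Fin n) k →+* k) := by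
    rw [M0, Ideal.span_le]
    rintro g ⟨i, rfl⟩
    simp [RingHom.mem_ker]
  have := h hf
  rw [RingHom.mem_ker] at this
  rwa [← constantCoeff_eq]

/-- Forward direction: members of `M0 ^ s` have no coefficients in degrees `< s`. -/
lemma coeff_eq_zero_of_mem_M0_pow :
    ∀ (s : ℕ) (f : MvPolynomial (Fin n) k), f ∈ M0 k n ^ s →
      ∀ d : Fin n →₀ ℕ, d.sum (fun _ e => e) < s → coeff d f = 0 := by
  intro s
  induction s with
  | zero => intro f _ d hd; omega
  | succ s ih =>
    intro f hf d hd
    rw [pow_succ] at hf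
    refine Submodule.mul_induction_on hf (fun a ha b hb => ?_) (fun x y ihx ihy => ?_)
    · rw [coeff_mul]
      apply Finset.sum_eq_zero
      rintro ⟨d1, d2⟩ hmem
      have hsum : d1 + d2 = d := Finset.HasAntidiagonal.mem_antidiagonal.mp hmem
      have hdeg : d1.sum (fun _ e => e) + d2.sum (fun _ e => e) < s + 1 := by
        rw [← degsum_add, hsum]; exact hd
      by_cases h1 : d1.sum (fun _ e => e) < s
      · rw [ih a ha d1 h1, zero_mul]
      · have h2 : d2.sum (fun _ e => e) = 0 := by omega
        have hd2 : d2 = 0 := by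
          ext i
          simp only [Finsupp.coe_zero, Pi.zero_apply]
          by_contra hne
          have hi : i ∈ d2.support := Finsupp.mem_support_iff.mpr hne
          have : d2 i ≤ d2.sum (fun _ e => e) :=
            Finset.single_le_sum (fun _ _ => Nat.zero_le _) hi
          omega
        rw [hd2, coeff_zero_of_mem_M0 hb, mul_zero]
    · rw [coeff_add, ihx, ihy, add_zero]

lemma prod_X_pow_mem (t : Finset (Fin n)) (d : Fin n → ℕ) :
    (∏ i ∈ t, (X i : MvPolynomial (Fin n) k) ^ d i) ∈ M0 k n ^ (∑ i ∈ t, d i) := by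
  classical
  induction t using Finset.induction_on with
  | empty => simp
  | insert _ _ hnotmem ih =>
    rename_i a t
    rw [Finset.prod_insert hnotmem, Finset.sum_insert hnotmem, pow_add]
    exact Ideal.mul_mem_mul (Ideal.pow_mem_pow (X_mem_M0 a) _) ih

/-- Backward direction: if all coefficients in degrees `< s` vanish, `f ∈ M0 ^ s`. -/
lemma mem_M0_pow_of_coeff (s : ℕ) (f : MvPolynomial (Fin n) k)
    (h : ∀ d : Fin n →₀ ℕ, d.sum (fun _ e => e) < s → coeff d f = 0) :
    f ∈ M0 k n ^ s := by
  rw [f.as_sum]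
  apply Ideal.sum_mem
  intro d hd
  by_cases hc : coeff d f = 0
  · rw [hc, map_zero]; exact Ideal.zero_mem _
  have hdeg : s ≤ d.sum fun _ e => e := by
    by_contra hlt
    exact hc (h d (by omega))
  rw [monomial_eq]
  apply Ideal.mul_mem_left
  have : (d.prod fun i e => (X i : MvPolynomial (Fin n) k) ^ e)
      ∈ M0 k n ^ (∑ i ∈ d.support, d i) := prod_X_pow_mem d.support d
  exact Ideal.pow_le_pow_right hdeg this

/-- Coefficient of a partial derivative. -/
lemma coeff_pderiv_sub (i : Fin n) (d : Fin n →₀ ℕ) (hdi : d i ≠ 0)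
    (f : MvPolynomial (Fin n) k) :
    coeff (d - Finsupp.single i 1) (pderiv i f) = coeff d f * (d i : k) := by
  induction f using MvPolynomial.induction_on' with
  | monomial e a =>
    rw [pderiv_monomial, coeff_monomial, coeff_monomial]
    by_cases he : e = d
    · subst he; simp
    · rw [if_neg he, zero_mul]
      by_cases h2 : e - Finsupp.single i 1 = d - Finsupp.single i 1
      · rw [if_pos h2]
        by_cases hei : e i = 0
        · simp [hei]
        · exfalso
          apply he
          ext j
          have hj := DFunLike.congr_fun h2 j
          simp only [Finsupp.tsub_apply] at hj
          by_cases hji : j = i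
          · subst hji
            simp only [Finsupp.single_eq_same] at hj
            omega
          · simpa [Finsupp.single_eq_of_ne hji] using hj
      · rw [if_neg h2]
  | add f g ihf ihg =>
    rw [map_add, coeff_add, coeff_add, ihf, ihg, add_mul]

/-- Key lemma at the origin: if `f` vanishes at `0` and all partials lie in
`M0 ^ s`, then `f ∈ M0 ^ (s+1)`. -/
lemma mem_M0_pow_succ (s : ℕ) (f : MvPolynomial (Fin n) k)
    (hf : f ∈ M0 k n) (hD : ∀ i, pderiv i f ∈ M0 k n ^ s) :
    f ∈ M0 k n ^ (s + 1) := by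
  apply mem_M0_pow_of_coeff
  intro d hd
  by_cases hd0 : d = 0
  · subst hd0; exact coeff_zero_of_mem_M0 hf
  · obtain ⟨i, hi⟩ : ∃ i, d i ≠ 0 := by
      by_contra hno
      push_neg at hno
      exact hd0 (Finsupp.ext hno)
    have hle : Finsupp.single i 1 ≤ d := Finsupp.single_le_iff.mpr (by omega)
    have hdd : (d - Finsupp.single i 1) + Finsupp.single i 1 = d :=
      tsub_add_cancel_of_le hle
    have hdeg : (d - Finsupp.single i 1).sum (fun _ e => e) < s := by
      have h1 := degsum_add (d - Finsupp.single i 1) (Finsupp.single i 1)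
      rw [hdd] at h1
      have hs1 : (Finsupp.single i 1).sum (fun _ e => (e : ℕ)) = 1 := by simp
      have hdge : 1 ≤ d.sum fun _ e => e := by
        have : d i ≤ d.sum (fun _ e => e) :=
          Finset.single_le_sum (fun _ _ => Nat.zero_le _)
            (Finsupp.mem_support_iff.mpr hi)
        omega
      omega
    have h0 := coeff_eq_zero_of_mem_M0_pow s (pderiv i f) (hD i) _ hdeg
    rw [coeff_pderiv_sub i d hi] at h0
    have : (d i : k) ≠ 0 := Nat.cast_ne_zero.mpr hi
    exact (mul_eq_zero.mp h0).resolve_right this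

/-- Chain rule for the translation substitution. -/
lemma pderiv_aeval_translate (c : Fin n → k) (f : MvPolynomial (Fin n) k) (j : Fin n) :
    pderiv j (aeval (fun i => X i + C (c i)) f) =
      aeval (fun i => X i + C (c i)) (pderiv j f) := by
  classical
  induction f using MvPolynomial.induction_on with
  | C a => simp only [aeval_C, algebraMap_eq, pderiv_C, map_zero]
  | add f g ihf ihg => simp only [map_add, ihf, ihg]
  | mul_X f i ih =>
    by_cases h : j = i
    · subst h
      simp only [map_mul, aeval_X, pderiv_mul, map_add, ih, pderiv_X_self, pderiv_C,
        add_zero, map_one, mul_one]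
    · simp only [map_mul, aeval_X, pderiv_mul, map_add, ih, pderiv_X_of_ne h,
        pderiv_X_of_ne (Ne.symm h), pderiv_C, add_zero, mul_zero, map_zero]

lemma translate_inv (p : Fin n → k) (f : MvPolynomial (Fin n) k) :
    aeval (fun i => X i - C (p i)) (aeval (fun i => X i + C (p i)) f) = f := by
  induction f using MvPolynomial.induction_on with
  | C a => simp only [aeval_C, algebraMap_eq]
  | add f g ihf ihg => simp only [map_add, ihf, ihg]
  | mul_X f i ih =>
    simp only [map_mul, map_add, aeval_X, aeval_C, ih, algebraMap_eq]
    ring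

/-- Translated key lemma: at any point `p`. -/
lemma mem_mIdeal_pow_succ (p : Fin n → k) (s : ℕ) (f : MvPolynomial (Fin n) k)
    (hf : f ∈ mIdeal p) (hD : ∀ i, pderiv i f ∈ mIdeal p ^ s) :
    f ∈ mIdeal p ^ (s + 1) := by
  set φ : MvPolynomial (Fin n) k →ₐ[k] MvPolynomial (Fin n) k :=
    aeval (fun i => X i + C (p i)) with hφ
  set ψ : MvPolynomial (Fin n) k →ₐ[k] MvPolynomial (Fin n) k :=
    aeval (fun i => X i - C (p i)) with hψ
  have hmapφ : Ideal.map (φ : MvPolynomial (Fin n) k →+* MvPolynomial (Fin n) k)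
      (mIdeal p) ≤ M0 k n := by
    rw [mIdeal, Ideal.map_span, Ideal.span_le]
    rintro g ⟨g', ⟨i, rfl⟩, rfl⟩
    simp only [RingHom.coe_coe, map_sub, hφ, aeval_X, aeval_C, algebraMap_eq,
      add_sub_cancel_right]
    exact X_mem_M0 i
  have hmapψ : Ideal.map (ψ : MvPolynomial (Fin n) k →+* MvPolynomial (Fin n) k)
      (M0 k n) ≤ mIdeal p := by
    rw [M0, Ideal.map_span, Ideal.span_le]
    rintro g ⟨g', ⟨i, rfl⟩, rfl⟩
    simp only [RingHom.coe_coe, hψ, aeval_X]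
    exact Ideal.subset_span ⟨i, rfl⟩
  have hφpow : ∀ (t : ℕ) (g : MvPolynomial (Fin n) k), g ∈ mIdeal p ^ t →
      φ g ∈ M0 k n ^ t := by
    intro t g hg
    have h1 : φ g ∈ Ideal.map (φ : MvPolynomial (Fin n) k →+* MvPolynomial (Fin n) k)
        (mIdeal p ^ t) := Ideal.mem_map_of_mem _ hg
    rw [Ideal.map_pow] at h1
    exact Ideal.pow_right_mono hmapφ t h1
  have hψpow : ∀ (t : ℕ) (g : MvPolynomial (Fin n) k), g ∈ M0 k n ^ t →
      ψ g ∈ mIdeal p ^ t := by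
    intro t g hg
    have h1 : ψ g ∈ Ideal.map (ψ : MvPolynomial (Fin n) k →+* MvPolynomial (Fin n) k)
        (M0 k n ^ t) := Ideal.mem_map_of_mem _ hg
    rw [Ideal.map_pow] at h1
    exact Ideal.pow_right_mono hmapψ t h1
  have key : φ f ∈ M0 k n ^ (s + 1) := by
    apply mem_M0_pow_succ
    · have := hφpow 1 f (by simpa using hf)
      simpa using this
    · intro i
      rw [hφ, pderiv_aeval_translate]
      exact hφpow s _ (hD i)
  have := hψpow (s + 1) _ key
  rwa [hψ, hφ, translate_inv] at this

lemma sub_C_eval_mem (p : Fin n → k) (f : MvPolynomial (Fin n) k) :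
    f - C (eval p f) ∈ mIdeal p := by
  induction f using MvPolynomial.induction_on with
  | C a => simp
  | add f g ihf ihg =>
    have h1 : f + g - C (eval p (f + g)) = (f - C (eval p f)) + (g - C (eval p g)) := by
      rw [map_add, map_add]; ring
    rw [h1]
    exact Ideal.add_mem _ ihf ihg
  | mul_X f i ih =>
    have h1 : f * X i - C (eval p (f * X i)) =
        f * (X i - C (p i)) + (f - C (eval p f)) * C (p i) := by
      rw [map_mul, eval_X, map_mul]; ring
    rw [h1]
    exact Ideal.add_mem _
      (Ideal.mul_mem_left _ _ (Ideal.subset_span ⟨i, rfl⟩))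
      (Ideal.mul_mem_right _ _ ih)

lemma mIdeal_eq_ker (p : Fin n → k) :
    mIdeal p = RingHom.ker (eval p : MvPolynomial (Fin n) k →+* k) := by
  apply le_antisymm
  · rw [mIdeal, Ideal.span_le]
    rintro g ⟨i, rfl⟩
    simp [RingHom.mem_ker]
  · intro f hf
    rw [RingHom.mem_ker] at hf
    have := sub_C_eval_mem p f
    rwa [hf, map_zero, sub_zero] at this

instance mIdeal_isPrime (p : Fin n → k) : (mIdeal p).IsPrime := by
  rw [mIdeal_eq_ker]
  exact RingHom.ker_isPrime _

end Aux

/-- A `D`-balanced ideal has order exactly `m` or `0` at every point: if `I` has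
maximal order `m` (order `≤ m` at every point and `= m` at some point) and is
`D`-balanced, `(D^i I)^m ⊆ I^{m−i}` for `0 < i < m`, then at every point `p`
either `ord_p I ≥ m` or `ord_p I = 0`. -/
theorem stmt_19 {k : Type*} [Field k] [CharZero k] {n : ℕ}
    (I : Ideal (MvPolynomial (Fin n) k)) (m : ℕ) (hm : 1 ≤ m)
    (hmax₁ : ∃ p : Fin n → k, I ≤ mIdeal p ^ m)
    (hmax₂ : ∀ p : Fin n → k, ¬ I ≤ mIdeal p ^ (m + 1))
    (hDbal : ∀ i : ℕ, 0 < i → i < m → (Dop^[i] I) ^ m ≤ I ^ (m - i)) :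
    ∀ p : Fin n → k, I ≤ mIdeal p ^ m ∨ ¬ I ≤ mIdeal p := by
  have key : ∀ (p : Fin n → k) (t : ℕ) (J : Ideal (MvPolynomial (Fin n) k)),
      Dop^[t] J ≤ mIdeal p → J ≤ mIdeal p ^ (t + 1) := by
    intro p t
    induction t with
    | zero => intro J hJ; simpa using hJ
    | succ t ih =>
      intro J hJ
      rw [Function.iterate_succ_apply] at hJ
      have hDJ : Dop J ≤ mIdeal p ^ (t + 1) := ih _ hJ
      intro f hf
      apply mem_mIdeal_pow_succ
      · have hfD : f ∈ Dop J := le_sup_left (α := Ideal (MvPolynomial (Fin n) k)) hf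
        exact Ideal.pow_le_self (Nat.succ_ne_zero t) (hDJ hfD)
      · intro i
        apply hDJ
        apply le_sup_right (α := Ideal (MvPolynomial (Fin n) k))
        exact Ideal.subset_span ⟨f, hf, i, rfl⟩
  intro p
  by_cases hIp : I ≤ mIdeal p
  · left
    rcases eq_or_lt_of_le hm with h1 | h2
    · rw [← h1, pow_one]; exact hIp
    have hD := hDbal (m - 1) (by omega) (by omega)
    have hm1 : m - (m - 1) = 1 := by omega
    rw [hm1, pow_one] at hD
    have hle : (Dop^[m - 1] I) ^ m ≤ mIdeal p := le_trans hD hIp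
    have hprime : (mIdeal p).IsPrime := mIdeal_isPrime p
    have hDm : Dop^[m - 1] I ≤ mIdeal p := hprime.le_of_pow_le hle
    have hfin := key p (m - 1) I hDm
    rwa [Nat.sub_add_cancel hm] at hfin
  · right; exact hIp
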